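/- arXiv:math/0612057 — 2 statements merged into one kernel-verified Lean document; each statement's English description precedes it below -/
import Mathlib

section
/- Define B_q(x) = ∑_{k=0}^∞ q^{k²} x^k / (q;q)_k for x ≥ 0, where (q;q)_k = ∏_{j=1}^k (1 - q^j). Then B_q converges for all x ≥ 0 and its derivative satisfies B_q'(x) ≤ (q/(1-q)) B_q(x) for all x ≥ 0. -/
/-- The q-Pochhammer symbol `(q;q)_k = ∏_{j=1}^k (1 - q^j)`. -/
noncomputable def qPoch (q : ℝ) (k : ℕ) : ℝ := ∏ j ∈ Finset.range k, (1 - q ^ (j + 1))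

/-- `B_q(x) = ∑_{k=0}^∞ q^{k²} x^k / (q;q)_k`. -/
noncomputable def Bq (q x : ℝ) : ℝ := ∑' k : ℕ, q ^ (k ^ 2) * x ^ k / qPoch q k

lemma qPoch_pos {q : ℝ} (hq0 : 0 < q) (hq1 : q < 1) (k : ℕ) : 0 < qPoch q k := by
  refine Finset.prod_pos fun j _ => ?_
  have : q ^ (j + 1) < 1 := pow_lt_one₀ hq0.le hq1 (Nat.succ_ne_zero j)
  linarith

lemma qPoch_succ (q : ℝ) (k : ℕ) : qPoch q (k + 1) = qPoch q k * (1 - q ^ (k + 1)) := by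
  simp [qPoch, Finset.prod_range_succ]

lemma summable_Bq {q : ℝ} (hq0 : 0 < q) (hq1 : q < 1) {x : ℝ} (hx : 0 ≤ x) :
    Summable (fun k : ℕ => q ^ (k ^ 2) * x ^ k / qPoch q k) := by
  have h1q : (0:ℝ) < 1 - q := by linarith
  apply summable_of_ratio_norm_eventually_le (r := 1/2) (by norm_num)
  have htend : Filter.Tendsto (fun k : ℕ => q ^ (2 * k + 1) * x / (1 - q))
      Filter.atTop (nhds 0) := by
    have h2 : Filter.Tendsto (fun k : ℕ => (q ^ 2) ^ k) Filter.atTop (nhds 0) :=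
      tendsto_pow_atTop_nhds_zero_of_lt_one (by positivity) (by nlinarith)
    have : (fun k : ℕ => q ^ (2 * k + 1) * x / (1 - q))
        = fun k : ℕ => (q ^ 2) ^ k * (q * x / (1 - q)) := by
      funext k; rw [← pow_mul]; ring_nf
    rw [this]
    simpa using h2.mul_const (q * x / (1 - q))
  filter_upwards [htend.eventually_le_const (by norm_num : (0:ℝ) < 1/2)] with k hk
  have hP := qPoch_pos hq0 hq1 k
  have hPk1 := qPoch_pos hq0 hq1 (k + 1)
  have ha : (0:ℝ) < 1 - q ^ (k + 1) := by
    have : q ^ (k + 1) < 1 := pow_lt_one₀ hq0.le hq1 (Nat.succ_ne_zero k)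
    linarith
  have hf : (0:ℝ) ≤ q ^ (k ^ 2) * x ^ k / qPoch q k := by positivity
  have hf1 : (0:ℝ) ≤ q ^ ((k+1) ^ 2) * x ^ (k+1) / qPoch q (k+1) := by positivity
  rw [Real.norm_eq_abs, Real.norm_eq_abs, abs_of_nonneg hf, abs_of_nonneg hf1]
  have hkey : q ^ ((k+1) ^ 2) * x ^ (k+1) / qPoch q (k+1)
      = (q ^ (k ^ 2) * x ^ k / qPoch q k) * (q ^ (2 * k + 1) * x / (1 - q ^ (k+1))) := by
    rw [qPoch_succ, show (k+1)^2 = k^2 + (2*k+1) by ring, pow_add, pow_succ]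
    field_simp
    ring
  have hratio : q ^ (2 * k + 1) * x / (1 - q ^ (k+1)) ≤ 1/2 := by
    have h1 : (1:ℝ) - q ≤ 1 - q ^ (k+1) := by
      have : q ^ (k + 1) ≤ q ^ 1 := pow_le_pow_of_le_one hq0.le hq1.le (by omega)
      rw [pow_one] at this; linarith
    have h2 : q ^ (2 * k + 1) * x / (1 - q ^ (k+1)) ≤ q ^ (2 * k + 1) * x / (1 - q) :=
      div_le_div_of_nonneg_left (by positivity) h1q h1
    linarith
  rw [hkey]
  calc (q ^ (k ^ 2) * x ^ k / qPoch q k) * (q ^ (2 * k + 1) * x / (1 - q ^ (k+1)))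
      ≤ (q ^ (k ^ 2) * x ^ k / qPoch q k) * (1/2) := mul_le_mul_of_nonneg_left hratio hf
    _ = 1/2 * (q ^ (k ^ 2) * x ^ k / qPoch q k) := by ring

lemma term_ineq {q x : ℝ} (hq0 : 0 < q) (hq1 : q < 1) (hx : 0 ≤ x) (k : ℕ) :
    q ^ ((k+1) ^ 2) / qPoch q (k+1) * (((k:ℝ)+1) * x ^ k)
      ≤ q / (1 - q) * (q ^ (k ^ 2) * x ^ k / qPoch q k) := by
  have h1q : (0:ℝ) < 1 - q := by linarith
  have hP := qPoch_pos hq0 hq1 k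
  have ha : (0:ℝ) < 1 - q ^ (k + 1) := by
    have : q ^ (k + 1) < 1 := pow_lt_one₀ hq0.le hq1 (Nat.succ_ne_zero k)
    linarith
  -- key scalar inequality
  have hgeom : (1 - q) * ∑ j ∈ Finset.range (k+1), q ^ j = 1 - q ^ (k+1) := by
    have := geom_sum_mul q (k+1)
    nlinarith [this]
  have hsum : ((k:ℝ)+1) * q ^ (2*k) ≤ ∑ j ∈ Finset.range (k+1), q ^ j := by
    calc ((k:ℝ)+1) * q ^ (2*k) = ∑ _j ∈ Finset.range (k+1), q ^ (2*k) := by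
          rw [Finset.sum_const, Finset.card_range, nsmul_eq_mul]; push_cast; ring
      _ ≤ ∑ j ∈ Finset.range (k+1), q ^ j := by
          refine Finset.sum_le_sum fun j hj => ?_
          exact pow_le_pow_of_le_one hq0.le hq1.le
            (by have := Finset.mem_range.mp hj; omega)
  have hS : ((k:ℝ)+1) * q ^ (2*k) * (1 - q) ≤ 1 - q ^ (k+1) := by
    rw [← hgeom]
    nlinarith [hsum]
  have hcoef : q ^ ((k+1) ^ 2) / qPoch q (k+1) * ((k:ℝ)+1)
      ≤ q / (1 - q) * (q ^ (k ^ 2) / qPoch q k) := by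
    rw [qPoch_succ, div_mul_eq_mul_div, div_mul_div_comm,
      div_le_div_iff₀ (by positivity) (by positivity)]
    have hexp : q ^ ((k+1)^2) = q ^ (k^2) * q ^ (2*k) * q := by
      rw [show (k+1)^2 = k^2 + 2*k + 1 by ring, pow_add, pow_add, pow_one]
    rw [hexp]
    have := mul_le_mul_of_nonneg_left hS
      (by positivity : (0:ℝ) ≤ q * q ^ (k ^ 2) * qPoch q k)
    nlinarith [this]
  have hxk : (0:ℝ) ≤ x ^ k := by positivity
  calc q ^ ((k+1) ^ 2) / qPoch q (k+1) * (((k:ℝ)+1) * x ^ k)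
      = (q ^ ((k+1) ^ 2) / qPoch q (k+1) * ((k:ℝ)+1)) * x ^ k := by ring
    _ ≤ (q / (1 - q) * (q ^ (k ^ 2) / qPoch q k)) * x ^ k :=
        mul_le_mul_of_nonneg_right hcoef hxk
    _ = q / (1 - q) * (q ^ (k ^ 2) * x ^ k / qPoch q k) := by ring

theorem stmt_1 (q : ℝ) (hq0 : 0 < q) (hq1 : q < 1) :
    (∀ x : ℝ, 0 ≤ x → Summable (fun k : ℕ => q ^ (k ^ 2) * x ^ k / qPoch q k)) ∧
    (∀ x : ℝ, 0 ≤ x → HasDerivAt (Bq q) (deriv (Bq q) x) x ∧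
      deriv (Bq q) x ≤ q / (1 - q) * Bq q x) := by
  have h1q : (0:ℝ) < 1 - q := by linarith
  refine ⟨fun x hx => summable_Bq hq0 hq1 hx, fun x hx => ?_⟩
  set R : ℝ := |x| + 1 with hR
  have hR1 : (1:ℝ) ≤ R := by have := abs_nonneg x; rw [hR]; linarith
  have hR0 : (0:ℝ) < R := by linarith
  set g' : ℕ → ℝ → ℝ := fun n y => q ^ (n ^ 2) / qPoch q n * ((n:ℝ) * y ^ (n - 1)) with hg'
  set u : ℕ → ℝ := fun n => q ^ (n ^ 2) * (2 * R) ^ n / qPoch q n with hu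
  have hu_sum : Summable u := summable_Bq hq0 hq1 (by positivity)
  have hxmem : x ∈ Metric.ball (0:ℝ) R := by
    simp [Metric.mem_ball, Real.dist_eq, hR]
  have hderiv : ∀ (n : ℕ) (y : ℝ), y ∈ Metric.ball (0:ℝ) R →
      HasDerivAt (fun z => q ^ (n ^ 2) * z ^ n / qPoch q n) (g' n y) y := by
    intro n y _
    have heq : (fun z : ℝ => q ^ (n ^ 2) * z ^ n / qPoch q n)
        = fun z : ℝ => q ^ (n ^ 2) / qPoch q n * z ^ n := by
      funext z; ring
    rw [heq]
    exact (hasDerivAt_pow n y).const_mul _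
  have hbound : ∀ (n : ℕ) (y : ℝ), y ∈ Metric.ball (0:ℝ) R → ‖g' n y‖ ≤ u n := by
    intro n y hy
    have hyR : |y| ≤ R := by
      rw [Metric.mem_ball, Real.dist_eq, sub_zero] at hy; linarith
    have hc : (0:ℝ) ≤ q ^ (n ^ 2) / qPoch q n := by
      have := qPoch_pos hq0 hq1 n; positivity
    have hnorm : ‖g' n y‖ = q ^ (n ^ 2) / qPoch q n * ((n:ℝ) * |y| ^ (n - 1)) := by
      rw [hg', Real.norm_eq_abs, abs_mul, abs_of_nonneg hc, abs_mul, abs_pow,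
        Nat.abs_cast]
    rw [hnorm]
    have hstep : (n:ℝ) * |y| ^ (n - 1) ≤ (2 * R) ^ n := by
      have h1 : |y| ^ (n - 1) ≤ R ^ (n - 1) :=
        pow_le_pow_left₀ (abs_nonneg y) hyR _
      have h2 : R ^ (n - 1) ≤ R ^ n := pow_le_pow_right₀ hR1 (Nat.sub_le n 1)
      have h3 : (n:ℝ) ≤ 2 ^ n := by
        exact_mod_cast (Nat.lt_two_pow_self (n := n)).le
      calc (n:ℝ) * |y| ^ (n - 1) ≤ 2 ^ n * R ^ n := by
            have hy0 : (0:ℝ) ≤ |y| ^ (n-1) := by positivity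
            have := mul_le_mul h3 (h1.trans h2) hy0 (by positivity)
            linarith
        _ = (2 * R) ^ n := by rw [mul_pow]
    calc q ^ (n ^ 2) / qPoch q n * ((n:ℝ) * |y| ^ (n - 1))
        ≤ q ^ (n ^ 2) / qPoch q n * (2 * R) ^ n := mul_le_mul_of_nonneg_left hstep hc
      _ = u n := by rw [hu]; ring
  have hsum0 : Summable (fun n : ℕ => q ^ (n ^ 2) * x ^ n / qPoch q n) :=
    summable_Bq hq0 hq1 hx
  have HD : HasDerivAt (fun z => ∑' n : ℕ, q ^ (n ^ 2) * z ^ n / qPoch q n)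
      (∑' n, g' n x) x :=
    hasDerivAt_tsum_of_isPreconnected hu_sum Metric.isOpen_ball
      (convex_ball (0:ℝ) R).isPreconnected hderiv hbound hxmem hsum0 hxmem
  have HDB : HasDerivAt (Bq q) (∑' n, g' n x) x := HD
  have hde : deriv (Bq q) x = ∑' n, g' n x := HDB.deriv
  refine ⟨hde ▸ HDB, ?_⟩
  rw [hde]
  have hg_sum : Summable (fun n => g' n x) :=
    Summable.of_norm_bounded hu_sum fun n => hbound n x hxmem
  rw [hg_sum.tsum_eq_zero_add]
  have hg0 : g' 0 x = 0 := by simp [hg']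
  rw [hg0, zero_add]
  have hterm : ∀ n : ℕ, g' (n+1) x ≤ q / (1 - q) * (q ^ (n ^ 2) * x ^ n / qPoch q n) := by
    intro n
    have := term_ineq hq0 hq1 hx (q := q) (x := x) n
    simpa [hg', Nat.add_sub_cancel] using this
  have hle : ∑' n, g' (n+1) x
      ≤ ∑' n, q / (1 - q) * (q ^ (n ^ 2) * x ^ n / qPoch q n) :=
    Summable.tsum_le_tsum hterm ((summable_nat_add_iff 1).mpr hg_sum)
      (hsum0.mul_left _)
  rw [tsum_mul_left] at hle
  exact hle
end

section
/- For 0 < q < 1 and any nonzero complex z, the theta function Θ(z|q) = ∑_{n=-∞}^∞ q^{n²} z^n converges absolutely and satisfies the Jacobi triple product identity Θ(z|q) = (q²;q²)_∞ (-qz;q²)_∞ (-q/z;q²)_∞. -/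
open Filter Finset Topology
namespace JTP
noncomputable def G (q : ℝ) (k : ℕ) : ℝ := ∏ i ∈ Finset.range k, (1 - q ^ (2*i+2))
noncomputable def Gz (q : ℝ) (a : ℤ) : ℝ := G q a.toNat
noncomputable def A (q : ℝ) (m : ℕ) (n : ℤ) : ℝ :=
  if n.natAbs ≤ m then q ^ (n^2) * G q (2*m) / (Gz q ((m:ℤ)+n) * Gz q ((m:ℤ)-n)) else 0
variable {q : ℝ}
lemma G_pos (hq0 : 0 < q) (hq1 : q < 1) (k : ℕ) : 0 < G q k := by
  apply Finset.prod_pos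
  intro i _
  have : q ^ (2*i+2) < 1 := pow_lt_one₀ hq0.le hq1 (by omega)
  linarith
lemma Gz_pos (hq0 : 0 < q) (hq1 : q < 1) (a : ℤ) : 0 < Gz q a := G_pos hq0 hq1 _
lemma G_succ (k : ℕ) : G q (k+1) = G q k * (1 - q ^ (2*k+2)) := Finset.prod_range_succ _ _
lemma Gz_succ (hq0 : 0 < q) {a : ℤ} (ha : 0 ≤ a) :
    Gz q (a+1) = Gz q a * (1 - q ^ (2*a+2)) := by
  lift a to ℕ using ha
  show G q ((a+1:ℤ)).toNat = G q (a:ℤ).toNat * _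
  rw [show ((a:ℤ)+1).toNat = a+1 by omega, show ((a:ℤ)).toNat = a by omega, G_succ,
    show (2*(a:ℤ)+2) = ((2*a+2 : ℕ) : ℤ) by push_cast; ring, zpow_natCast]
lemma A_eval {m : ℕ} {n : ℤ} (hn : n.natAbs ≤ m) :
    A q m n = q ^ (n^2) * G q (2*m) / (Gz q ((m:ℤ)+n) * Gz q ((m:ℤ)-n)) := if_pos hn
lemma A_zero {m : ℕ} {n : ℤ} (hn : m < n.natAbs) : A q m n = 0 := if_neg (by omega)
lemma A_neg (m : ℕ) (n : ℤ) : A q m (-n) = A q m n := by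
  unfold A
  rw [Int.natAbs_neg, show ((-n:ℤ)^2) = n^2 by ring, show (m:ℤ) + -n = (m:ℤ)-n by ring,
    show (m:ℤ) - -n = (m:ℤ)+n by ring, mul_comm (Gz q ((m:ℤ)-n))]

set_option maxHeartbeats 2000000 in
lemma A_rec (hq0 : 0 < q) (hq1 : q < 1) (m : ℕ) (n : ℤ) :
    A q (m+1) n = (1 + q ^ (4*(m:ℤ)+2)) * A q m n
      + q ^ (2*(m:ℤ)+1) * (A q m (n-1) + A q m (n+1)) := by
  have hq' : q ≠ 0 := hq0.ne'
  suffices H : ∀ n : ℤ, 0 ≤ n → A q (m+1) n = (1 + q ^ (4*(m:ℤ)+2)) * A q m n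
      + q ^ (2*(m:ℤ)+1) * (A q m (n-1) + A q m (n+1)) by
    rcases le_or_gt 0 n with h | h
    · exact H n h
    · have h1 := H (-n) (by omega)
      rw [show (-n - 1 : ℤ) = -(n+1) by ring, show (-n+1 : ℤ) = -(n-1) by ring,
        A_neg (m+1) n, A_neg m n, A_neg m (n+1), A_neg m (n-1)] at h1
      rw [h1]; ring
  intro n hn
  lift n to ℕ using hn with k
  by_cases hka : m+2 ≤ k
  · -- all zero
    rw [A_zero (n := (k:ℤ)) (by omega), A_zero (n := (k:ℤ)) (by omega),
      A_zero (n := (k:ℤ)-1) (by omega), A_zero (n := (k:ℤ)+1) (by omega)]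
    ring
  by_cases hkb : k = m+1
  · have hk : (k:ℤ) = (m:ℤ)+1 := by omega
    rw [A_zero (m := m) (n := (k:ℤ)) (by omega), A_zero (m := m) (n := (k:ℤ)+1) (by omega),
      A_eval (m := m+1) (n := (k:ℤ)) (by omega),
      A_eval (m := m) (n := (k:ℤ)-1) (by omega)]
    simp only [Gz]
    rw [show (((m+1:ℕ):ℤ) + (k:ℤ)).toNat = 2*(m+1) by omega,
      show (((m+1:ℕ):ℤ) - (k:ℤ)).toNat = 0 by omega,
      show ((m:ℤ) + ((k:ℤ)-1)).toNat = 2*m by omega,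
      show ((m:ℤ) - ((k:ℤ)-1)).toNat = 0 by omega]
    have hG0 : G q 0 = 1 := by simp [G]
    have hG2 : G q (2*(m+1)) ≠ 0 := (G_pos hq0 hq1 _).ne'
    have hG2m : G q (2*m) ≠ 0 := (G_pos hq0 hq1 _).ne'
    have hpow : q ^ (((k:ℤ))^2) = q ^ (2*(m:ℤ)+1) * q ^ (((k:ℤ)-1)^2) := by
      rw [← zpow_add₀ hq']
      congr 1
      rw [hk]; ring
    rw [hG0, hpow]
    field_simp
    ring
  by_cases hkc : k = m
  · by_cases hm : m = 0
    · subst hm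
      have hk0 : k = 0 := hkc
      subst hk0
      rw [A_eval (m := 1) (n := ((0:ℕ):ℤ)) (by omega),
        A_eval (m := 0) (n := ((0:ℕ):ℤ)) (by omega),
        A_zero (m := 0) (n := ((0:ℕ):ℤ)-1) (by omega),
        A_zero (m := 0) (n := ((0:ℕ):ℤ)+1) (by omega)]
      simp only [Gz]
      have hG1 : G q 1 = 1 - q^2 := by simp [G]
      have hG2 : G q 2 = (1-q^2)*(1-q^4) := by
        rw [show (2:ℕ) = 1+1 from rfl, G_succ, hG1]
      have hG0 : G q 0 = 1 := by simp [G]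
      have h2 : (1:ℝ) - q^2 ≠ 0 := by
        have : q^2 < 1 := pow_lt_one₀ hq0.le hq1 (by omega); linarith
      norm_num [hG0, hG1, hG2]
      rw [div_eq_iff (mul_ne_zero h2 h2)]
      ring
    · -- k = m ≥ 1
      have hk : (k:ℤ) = (m:ℤ) := by omega
      rw [A_eval (m := m+1) (n := (k:ℤ)) (by omega),
        A_eval (m := m) (n := (k:ℤ)) (by omega),
        A_eval (m := m) (n := (k:ℤ)-1) (by omega),
        A_zero (m := m) (n := (k:ℤ)+1) (by omega)]
      simp only [Gz]
      rw [show (((m+1:ℕ):ℤ) + (k:ℤ)).toNat = 2*m+1 by omega,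
        show (((m+1:ℕ):ℤ) - (k:ℤ)).toNat = 1 by omega,
        show ((m:ℤ) + (k:ℤ)).toNat = 2*m by omega,
        show ((m:ℤ) - (k:ℤ)).toNat = 0 by omega,
        show ((m:ℤ) + ((k:ℤ)-1)).toNat = 2*m-1 by omega,
        show ((m:ℤ) - ((k:ℤ)-1)).toNat = 1 by omega]
      set g := G q (2*m-1) with hg
      set w := q^m with hwdef
      have hw0 : 0 < w := pow_pos hq0 m
      have hw1 : w < 1 := pow_lt_one₀ hq0.le hq1 hm
      have hA : G q (2*m) = g * (1 - w^4) := by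
        rw [show 2*m = (2*m-1)+1 by omega, G_succ, hg]
        congr 2
        rw [hwdef, ← pow_mul]
        congr 1
        omega
      have hB : G q (2*m+1) = g * (1-w^4) * (1-w^4*q^2) := by
        rw [G_succ, hA]
        congr 2
        rw [hwdef, ← pow_mul, ← pow_add]
        congr 1
        omega
      have hC : G q (2*(m+1)) = g*(1-w^4)*(1-w^4*q^2)*(1-w^4*q^4) := by
        rw [show 2*(m+1) = (2*m+1)+1 by omega, G_succ, hB]
        congr 2
        rw [hwdef, ← pow_mul, ← pow_add]
        congr 1
        omega
      have hG1 : G q 1 = 1 - q^2 := by simp [G]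
      have hG0 : G q 0 = 1 := by simp [G]
      have hXm : q ^ (((k:ℤ)-1)^2) = q ^ ((k:ℤ)^2) * q / w^2 := by
        rw [eq_div_iff (by positivity), hwdef, ← pow_mul, ← zpow_natCast q (m*2),
          ← zpow_add₀ hq',
          show q ^ ((k:ℤ)^2) * q = q ^ ((k:ℤ)^2+1) by rw [zpow_add₀ hq', zpow_one]]
        congr 1
        rw [hk]; push_cast; ring
      have hq2m1 : q ^ (2*(m:ℤ)+1) = w^2*q := by
        rw [hwdef, ← pow_mul, show (2*(m:ℤ)+1) = ((m*2+1 : ℕ):ℤ) by omega, zpow_natCast,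
          pow_succ]
      have hq4m2 : q ^ (4*(m:ℤ)+2) = w^4*q^2 := by
        rw [hwdef, ← pow_mul, show (4*(m:ℤ)+2) = ((m*4+2 : ℕ):ℤ) by omega, zpow_natCast,
          pow_add]
      have hg0 : 0 < g := G_pos hq0 hq1 _
      have h2 : (0:ℝ) < 1 - q^2 := by
        have : q^2 < 1 := pow_lt_one₀ hq0.le hq1 (by omega); linarith
      have hw4 : w^4 < 1 := pow_lt_one₀ hw0.le hw1 (by omega)
      have hq2 : q^2 < 1 := pow_lt_one₀ hq0.le hq1 (by omega)
      have h3 : (0:ℝ) < 1 - w^4 := by linarith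
      have h4 : (0:ℝ) < 1 - w^4*q^2 := by nlinarith [pow_pos hw0 4, pow_pos hq0 2]
      rw [hA, hB, hC, hG0, hG1, hXm, hq2m1, hq4m2]
      field_simp
      ring
  · -- interior : k + 1 ≤ m
    have hkm : k + 1 ≤ m := by omega
    rw [A_eval (m := m+1) (n := (k:ℤ)) (by omega),
      A_eval (m := m) (n := (k:ℤ)) (by omega),
      A_eval (m := m) (n := (k:ℤ)-1) (by omega),
      A_eval (m := m) (n := (k:ℤ)+1) (by omega)]
    simp only [Gz]
    rw [show (((m+1:ℕ):ℤ) + (k:ℤ)).toNat = (m+k)+1 by omega,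
      show (((m+1:ℕ):ℤ) - (k:ℤ)).toNat = (m-k)+1 by omega,
      show ((m:ℤ) + (k:ℤ)).toNat = m+k by omega,
      show ((m:ℤ) - (k:ℤ)).toNat = m-k by omega,
      show ((m:ℤ) + ((k:ℤ)-1)).toNat = (m+k)-1 by omega,
      show ((m:ℤ) - ((k:ℤ)-1)).toNat = (m-k)+1 by omega,
      show ((m:ℤ) + ((k:ℤ)+1)).toNat = (m+k)+1 by omega,
      show ((m:ℤ) - ((k:ℤ)+1)).toNat = (m-k)-1 by omega]
    set g2 := G q (2*m) with hg2
    set gp := G q ((m+k)-1) with hgp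
    set gm := G q ((m-k)-1) with hgm
    set u := q^(m+k) with hu
    set v := q^(m-k) with hv
    have hu0 : 0 < u := pow_pos hq0 _
    have hv0 : 0 < v := pow_pos hq0 _
    have hu1 : u < 1 := pow_lt_one₀ hq0.le hq1 (by omega)
    have hv1 : v < 1 := pow_lt_one₀ hq0.le hq1 (by omega)
    have hu2 : u^2 < 1 := by nlinarith
    have hv2 : v^2 < 1 := by nlinarith
    have hq2 : q^2 < 1 := pow_lt_one₀ hq0.le hq1 (by omega)
    -- G relations
    have hGp : G q (m+k) = gp * (1 - u^2) := by
      rw [show m+k = ((m+k)-1)+1 by omega, G_succ, hgp, hu, ← pow_mul]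
      congr 3
      omega
    have hGm : G q (m-k) = gm * (1 - v^2) := by
      rw [show m-k = ((m-k)-1)+1 by omega, G_succ, hgm, hv, ← pow_mul]
      congr 3
      omega
    have hGp1 : G q ((m+k)+1) = gp * (1 - u^2) * (1 - u^2*q^2) := by
      rw [G_succ, hGp, hu, ← pow_mul, ← pow_add]
      congr 3
      omega
    have hGm1 : G q ((m-k)+1) = gm * (1 - v^2) * (1 - v^2*q^2) := by
      rw [G_succ, hGm, hv, ← pow_mul, ← pow_add]
      congr 3
      omega
    have hg2a : G q (2*(m+1)) = g2 * (1 - u^2*v^2*q^2) * (1 - u^2*v^2*q^2*q^2) := by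
      have e1 : q ^ (2*(2*m)+2) = u^2*v^2*q^2 := by
        rw [hu, hv, ← pow_mul, ← pow_mul, ← pow_add, ← pow_add]
        congr 1
        omega
      have e2 : q ^ (2*(2*m+1)+2) = u^2*v^2*q^2*q^2 := by
        rw [hu, hv, ← pow_mul, ← pow_mul, ← pow_add, ← pow_add, ← pow_add]
        congr 1
        omega
      rw [show 2*(m+1) = (2*m+1)+1 by omega, G_succ, show 2*m+1 = (2*m)+1 from rfl, G_succ,
        e1, e2, hg2]
    -- power relations
    have hXm : q ^ (((k:ℤ)-1)^2) = q ^ ((k:ℤ)^2) * q * v / u := by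
      rw [eq_div_iff hu0.ne', hu, ← zpow_natCast q (m+k), ← zpow_add₀ hq',
        hv, ← zpow_natCast q (m-k),
        show q ^ ((k:ℤ)^2) * q * q^((m-k:ℕ):ℤ) = q ^ ((k:ℤ)^2 + 1 + ((m-k:ℕ):ℤ)) by
          rw [zpow_add₀ hq', zpow_add₀ hq', zpow_one]]
      congr 1
      push_cast [Nat.cast_sub (show k ≤ m by omega)]
      ring
    have hXp : q ^ (((k:ℤ)+1)^2) = q ^ ((k:ℤ)^2) * q * u / v := by
      rw [eq_div_iff hv0.ne', hv, ← zpow_natCast q (m-k), ← zpow_add₀ hq',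
        hu, ← zpow_natCast q (m+k),
        show q ^ ((k:ℤ)^2) * q * q^((m+k:ℕ):ℤ) = q ^ ((k:ℤ)^2 + 1 + ((m+k:ℕ):ℤ)) by
          rw [zpow_add₀ hq', zpow_add₀ hq', zpow_one]]
      congr 1
      push_cast [Nat.cast_sub (show k ≤ m by omega)]
      ring
    have hq2m1 : q ^ (2*(m:ℤ)+1) = u*v*q := by
      rw [hu, hv, ← pow_add, show (2*(m:ℤ)+1) = (((m+k)+(m-k)+1 : ℕ):ℤ) by omega, zpow_natCast,
        pow_succ]
    have hq4m2 : q ^ (4*(m:ℤ)+2) = u^2*v^2*q^2 := by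
      rw [hu, hv, ← pow_mul, ← pow_mul, ← pow_add, ← pow_add,
        show (4*(m:ℤ)+2) = (((m+k)*2+(m-k)*2+2 : ℕ):ℤ) by omega, zpow_natCast]
    have hgp0 : 0 < gp := G_pos hq0 hq1 _
    have hgm0 : 0 < gm := G_pos hq0 hq1 _
    have hg20 : 0 < g2 := G_pos hq0 hq1 _
    have h1 : (0:ℝ) < 1 - u^2 := by linarith
    have h2 : (0:ℝ) < 1 - v^2 := by linarith
    have h3 : (0:ℝ) < 1 - u^2*q^2 := by nlinarith [pow_pos hu0 2, pow_pos hq0 2]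
    have h4 : (0:ℝ) < 1 - v^2*q^2 := by nlinarith [pow_pos hv0 2, pow_pos hq0 2]
    rw [hGp, hGm, hGp1, hGm1, hg2a, hXm, hXp, hq2m1, hq4m2]
    field_simp
    ring

lemma G_le_one (hq0 : 0 < q) (hq1 : q < 1) (k : ℕ) : G q k ≤ 1 := by
  apply Finset.prod_le_one
  · intro i _
    have : q ^ (2*i+2) < 1 := pow_lt_one₀ hq0.le hq1 (by omega)
    linarith
  · intro i _
    have : 0 < q ^ (2*i+2) := pow_pos hq0 _
    linarith

lemma A_nonneg (hq0 : 0 < q) (hq1 : q < 1) (m : ℕ) (n : ℤ) : 0 ≤ A q m n := by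
  unfold A
  split
  · apply div_nonneg
    · exact mul_nonneg (zpow_pos hq0 _).le (G_pos hq0 hq1 _).le
    · exact mul_nonneg (Gz_pos hq0 hq1 _).le (Gz_pos hq0 hq1 _).le
  · exact le_refl 0

lemma A_le (hq0 : 0 < q) (hq1 : q < 1) {c : ℝ} (hcpos : 0 < c) (hc : ∀ k, c ≤ G q k)
    (m : ℕ) (n : ℤ) : A q m n ≤ q ^ (n^2) / (c*c) := by
  unfold A
  split
  · apply div_le_div₀ (zpow_pos hq0 _).le
    · exact mul_le_of_le_one_right (zpow_pos hq0 _).le (G_le_one hq0 hq1 _)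
    · positivity
    · exact mul_le_mul (hc _) (hc _) hcpos.le (Gz_pos hq0 hq1 _).le
  · positivity

lemma sum_core (hq0 : 0 < q) (hq1 : q < 1) {r : ℝ} (hr : 0 < r) :
    Summable (fun n : ℤ => q ^ (n^2) * r ^ n) := by
  have hgen : ∀ s : ℝ, 0 < s → Summable (fun k : ℕ => q ^ (k^2) * s ^ k) := by
    intro s hs
    apply summable_of_ratio_norm_eventually_le (r := 1/2) (by norm_num)
    have h0 : Tendsto (fun k : ℕ => q^(2*k+1) * s) atTop (𝓝 0) := by
      have h1 : Tendsto (fun k : ℕ => (q^2)^k) atTop (𝓝 0) :=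
        tendsto_pow_atTop_nhds_zero_of_lt_one (by positivity)
          (by nlinarith)
      have := (h1.const_mul q).mul_const s
      simp only [mul_zero, zero_mul] at this
      apply this.congr
      intro k
      rw [← pow_mul, pow_add, pow_one]
      ring
    have h1 : ∀ᶠ k : ℕ in atTop, q^(2*k+1)*s ≤ 1/2 :=
      h0.eventually (eventually_le_nhds (by norm_num))
    filter_upwards [h1] with k hk
    have hX : (0:ℝ) ≤ q^(k^2)*s^k := by positivity
    rw [Real.norm_eq_abs, Real.norm_eq_abs, abs_of_nonneg (by positivity),
      abs_of_nonneg (by positivity)]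
    calc q^((k+1)^2) * s^(k+1) = (q^(2*k+1)*s)*(q^(k^2)*s^k) := by
          rw [show (k+1)^2 = k^2 + (2*k+1) by ring, pow_add, pow_succ]; ring
    _ ≤ 1/2 * (q^(k^2)*s^k) := mul_le_mul_of_nonneg_right hk hX
  apply Summable.of_nat_of_neg
  · exact (hgen r hr).congr (fun k => by
      rw [show (((k:ℕ):ℤ)^2) = ((k^2:ℕ):ℤ) by push_cast; ring, zpow_natCast, zpow_natCast])
  · exact (hgen r⁻¹ (by positivity)).congr (fun k => by
      rw [show ((-(k:ℕ):ℤ)^2) = ((k^2:ℕ):ℤ) by push_cast; ring, zpow_natCast, zpow_neg,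
        zpow_natCast, inv_pow])


lemma mult_one_add (c : ℂ) {w : ℂ} (hw : ‖w‖ < 1) :
    Multipliable (fun j : ℕ => 1 + c * w^j) := by
  by_cases hzero : ∃ j, 1 + c*w^j = 0
  · obtain ⟨j0, hj0⟩ := hzero
    refine ⟨0, ?_⟩
    rw [HasProd]
    have hev : ∀ᶠ s : Finset ℕ in atTop, (0:ℂ) = ∏ i ∈ s, (1+c*w^i) := by
      filter_upwards [eventually_ge_atTop {j0}] with s hs
      exact (Finset.prod_eq_zero (hs (Finset.mem_singleton_self j0)) hj0).symm
    exact tendsto_const_nhds.congr' hev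
  · push_neg at hzero
    apply Complex.multipliable_of_summable_log
    have h0 : Tendsto (fun n : ℕ => ‖c‖ * ‖w‖^n) atTop (𝓝 0) := by
      have := (tendsto_pow_atTop_nhds_zero_of_lt_one (norm_nonneg w) hw).const_mul ‖c‖
      simpa using this
    obtain ⟨N, hN⟩ := (h0.eventually (eventually_le_nhds (show (0:ℝ) < 1/2 by norm_num))).exists
    rw [← summable_nat_add_iff N]
    apply Summable.of_norm_bounded (g := fun n => 3/2 * (‖c‖*‖w‖^N) * ‖w‖^n)
    · exact ((summable_geometric_of_lt_one (norm_nonneg w) hw).mul_left _)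
    · intro n
      have hsmall : ‖c * w^(n+N)‖ ≤ 1/2 := by
        rw [norm_mul, norm_pow]
        calc ‖c‖ * ‖w‖^(n+N) ≤ ‖c‖ * ‖w‖^N := by
              apply mul_le_mul_of_nonneg_left _ (norm_nonneg c)
              exact pow_le_pow_of_le_one (norm_nonneg w) hw.le (by omega)
        _ ≤ 1/2 := hN
      calc ‖Complex.log (1 + c*w^(n+N))‖ ≤ 3/2 * ‖c*w^(n+N)‖ :=
            Complex.norm_log_one_add_half_le_self hsmall
      _ = 3/2 * (‖c‖*‖w‖^N) * ‖w‖^n := by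
          rw [norm_mul, norm_pow, pow_add]; ring

lemma G_lower (hq0 : 0 < q) (hq1 : q < 1) : ∃ c > 0, ∀ k, c ≤ G q k := by
  obtain ⟨N, hN⟩ := ((tendsto_pow_atTop_nhds_zero_of_lt_one hq0.le hq1).eventually
    (eventually_le_nhds (show (0:ℝ) < 1/2 by norm_num))).exists
  set S : ℝ := (1-q)⁻¹ with hS
  have hqsum : Summable (fun i : ℕ => q ^ i) := summable_geometric_of_lt_one hq0.le hq1
  have hmono : ∀ a d : ℕ, G q (a + d) ≤ G q a := by
    intro a d
    rw [G, Finset.prod_range_add]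
    have h1 : ∏ i ∈ Finset.range d, (1 - q^(2*(a+i)+2)) ≤ 1 := by
      apply Finset.prod_le_one
      · intro i _
        have : q ^ (2*(a+i)+2) < 1 := pow_lt_one₀ hq0.le hq1 (by omega)
        linarith
      · intro i _
        have : 0 < q ^ (2*(a+i)+2) := pow_pos hq0 _
        linarith
    have h2 : 0 ≤ (G q a) := (G_pos hq0 hq1 a).le
    calc (∏ i ∈ Finset.range a, (1 - q^(2*i+2))) * ∏ i ∈ Finset.range d, (1 - q^(2*(a+i)+2))
        ≤ (∏ i ∈ Finset.range a, (1 - q^(2*i+2))) * 1 := by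
          apply mul_le_mul_of_nonneg_left h1 (G_pos hq0 hq1 a).le
    _ = G q a := by rw [mul_one, G]
  refine ⟨G q N * Real.exp (-2 * S), mul_pos (G_pos hq0 hq1 N) (Real.exp_pos _), ?_⟩
  intro k
  rcases le_or_gt k N with hk | hk
  · calc G q N * Real.exp (-2*S) ≤ G q N * 1 := by
          apply mul_le_mul_of_nonneg_left _ (G_pos hq0 hq1 N).le
          rw [Real.exp_le_one_iff]
          have h5 : (0:ℝ) ≤ (1-q)⁻¹ := by
            have : 0 < 1 - q := by linarith
            positivity
          rw [hS]; linarith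
    _ = G q N := mul_one _
    _ ≤ G q k := by
        obtain ⟨d, rfl⟩ := Nat.exists_eq_add_of_le hk
        exact hmono k d
  · obtain ⟨d, rfl⟩ := Nat.exists_eq_add_of_le hk.le
    have hsplit : G q (N+d) = G q N * ∏ i ∈ Finset.range d, (1 - q^(2*(N+i)+2)) :=
      Finset.prod_range_add _ N d
    rw [hsplit]
    apply mul_le_mul_of_nonneg_left _ (G_pos hq0 hq1 N).le
    calc Real.exp (-2*S) ≤ Real.exp (∑ i ∈ Finset.range d, (-2 * q^(N+i))) := by
          apply Real.exp_le_exp.2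
          have h1 : ∑ i ∈ Finset.range d, q^(N+i) ≤ S := by
            have h2 : ∀ i ∈ Finset.range d, q^(N+i) ≤ q^i := by
              intro i _
              exact pow_le_pow_of_le_one hq0.le hq1.le (by omega)
            calc ∑ i ∈ Finset.range d, q^(N+i) ≤ ∑ i ∈ Finset.range d, q^i :=
                  Finset.sum_le_sum h2
            _ ≤ ∑' i : ℕ, q^i := Summable.sum_le_tsum _ (fun i _ => by positivity) hqsum
            _ = S := tsum_geometric_of_lt_one hq0.le hq1
          calc -2*S ≤ -2 * ∑ i ∈ Finset.range d, q^(N+i) := by nlinarith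
          _ = ∑ i ∈ Finset.range d, (-2 * q^(N+i)) := by rw [Finset.mul_sum]
    _ = ∏ i ∈ Finset.range d, Real.exp (-2 * q^(N+i)) := by rw [← Real.exp_sum]
    _ ≤ ∏ i ∈ Finset.range d, (1 - q^(2*(N+i)+2)) := by
        apply Finset.prod_le_prod
        · intro i _
          positivity
        · intro i _
          have hx1 : q^(N+i) ≤ 1/2 := by
            calc q^(N+i) ≤ q^N := pow_le_pow_of_le_one hq0.le hq1.le (by omega)
            _ ≤ 1/2 := hN
          have hx0 : 0 < q^(N+i) := pow_pos hq0 _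
          have key : ∀ x : ℝ, 0 < x → x ≤ 1/2 → Real.exp (-2*x) ≤ 1 - x := by
            intro x hx0 hx1
            have h1 : 1 + 2*x ≤ Real.exp (2*x) := by
              have := Real.add_one_le_exp (2*x)
              linarith
            have h2 : 0 < 1 + 2*x := by linarith
            have h3 : Real.exp (-2*x) = (Real.exp (2*x))⁻¹ := by
              rw [← Real.exp_neg]; ring_nf
            rw [h3]
            have h4 : (Real.exp (2*x))⁻¹ ≤ (1+2*x)⁻¹ := by
              gcongr
            have h5 : (1+2*x)⁻¹ ≤ 1 - x := by
              rw [inv_le_iff_one_le_mul₀ h2]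
              nlinarith
            linarith
          have hq2 : q^(2*(N+i)+2) ≤ q^(N+i) := by
            apply pow_le_pow_of_le_one hq0.le hq1.le (by omega)
          calc Real.exp (-2*q^(N+i)) ≤ 1 - q^(N+i) := key _ hx0 hx1
          _ ≤ 1 - q^(2*(N+i)+2) := by linarith


lemma summable_shift (hq0 : 0 < q) (hq1 : q < 1) (m : ℕ) (c : ℤ) (f : ℤ → ℂ) :
    Summable (fun n : ℤ => (A q m (n+c) : ℂ) * f n) := by
  apply summable_of_ne_finset_zero (s := Finset.Icc (-(m:ℤ)-c) ((m:ℤ)-c))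
  intro b hb
  simp only [Finset.mem_Icc] at hb
  rw [A_zero (by omega)]
  simp

lemma A_zero_zero : A q 0 0 = 1 := by
  rw [A_eval (by simp)]
  simp [G, Gz]

lemma key (hq0 : 0 < q) (hq1 : q < 1) (z : ℂ) (hz : z ≠ 0) (m : ℕ) :
    (∏ j ∈ Finset.range m, (1 + (q:ℂ)*z*((q:ℂ)^2)^j)) *
      (∏ j ∈ Finset.range m, (1 + (q:ℂ)/z*((q:ℂ)^2)^j))
      = ∑' n : ℤ, (A q m n : ℂ) * z^n := by
  have hq' : q ≠ 0 := hq0.ne'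
  induction m with
  | zero =>
    simp only [Finset.range_zero, Finset.prod_empty, one_mul]
    rw [tsum_eq_single (0:ℤ)]
    · rw [A_zero_zero]; simp
    · intro b hb
      rw [A_zero (by omega)]
      simp
  | succ m ih =>
    rw [Finset.prod_range_succ, Finset.prod_range_succ]
    set Q : ℝ := q^(2*m+1) with hQdef
    have hQc : (q:ℂ)*((q:ℂ)^2)^m = (Q:ℂ) := by
      rw [hQdef]
      push_cast
      rw [← pow_mul]
      ring
    have f1 : 1 + (q:ℂ)*z*((q:ℂ)^2)^m = 1 + (Q:ℂ)*z := by rw [← hQc]; ring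
    have f2 : 1 + (q:ℂ)/z*((q:ℂ)^2)^m = 1 + (Q:ℂ)/z := by rw [← hQc]; ring
    have hQ1 : q ^ (2*(m:ℤ)+1) = Q := by
      rw [hQdef, ← zpow_natCast q (2*m+1)]
      congr 1
    have hQ2 : q ^ (4*(m:ℤ)+2) = Q^2 := by
      rw [hQdef, ← pow_mul, ← zpow_natCast q ((2*m+1)*2)]
      congr 1
      omega
    have hrec : ∀ n : ℤ, (A q (m+1) n : ℂ)
        = (1+(Q:ℂ)^2) * (A q m n : ℂ) + (Q:ℂ) * ((A q m (n-1) : ℂ) + (A q m (n+1) : ℂ)) := by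
      intro n
      have h := A_rec hq0 hq1 m n
      rw [hQ1, hQ2] at h
      exact_mod_cast congrArg (fun x : ℝ => (x:ℂ)) h
    -- summability of pieces
    have S0 : Summable (fun n : ℤ => (A q m n : ℂ) * z^n) := by
      have := summable_shift hq0 hq1 m 0 (fun n => z^n)
      simpa using this
    have Sm : Summable (fun n : ℤ => (A q m (n-1) : ℂ) * z^n) := by
      have := summable_shift hq0 hq1 m (-1) (fun n => z^n)
      simpa [sub_eq_add_neg] using this
    have Sp : Summable (fun n : ℤ => (A q m (n+1) : ℂ) * z^n) := by
      exact summable_shift hq0 hq1 m 1 (fun n => z^n)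
    have step1 : ∑' n : ℤ, (A q (m+1) n : ℂ) * z^n
        = ∑' n : ℤ, ((1+(Q:ℂ)^2) * ((A q m n : ℂ) * z^n)
            + ((Q:ℂ) * ((A q m (n-1) : ℂ) * z^n) + (Q:ℂ) * ((A q m (n+1) : ℂ) * z^n))) := by
      apply tsum_congr
      intro n
      rw [hrec]
      ring
    have step2 : ∑' n : ℤ, ((1+(Q:ℂ)^2) * ((A q m n : ℂ) * z^n)
            + ((Q:ℂ) * ((A q m (n-1) : ℂ) * z^n) + (Q:ℂ) * ((A q m (n+1) : ℂ) * z^n)))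
        = (1+(Q:ℂ)^2) * (∑' n : ℤ, (A q m n : ℂ) * z^n)
          + ((Q:ℂ) * (∑' n : ℤ, (A q m (n-1) : ℂ) * z^n)
            + (Q:ℂ) * (∑' n : ℤ, (A q m (n+1) : ℂ) * z^n)) := by
      rw [Summable.tsum_add (S0.mul_left _) ((Sm.mul_left _).add (Sp.mul_left _)),
        Summable.tsum_add (Sm.mul_left _) (Sp.mul_left _), tsum_mul_left, tsum_mul_left, tsum_mul_left]
    have shiftm : ∑' n : ℤ, (A q m (n-1) : ℂ) * z^n
        = (∑' n : ℤ, (A q m n : ℂ) * z^n) * z := by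
      rw [← tsum_mul_right]
      have := (Equiv.addRight (1:ℤ)).tsum_eq (fun n => (A q m (n-1) : ℂ) * z^n)
      rw [← this]
      apply tsum_congr
      intro n
      simp only [Equiv.coe_addRight, add_sub_cancel_right]
      rw [zpow_add₀ hz, zpow_one]
      ring
    have shiftp : ∑' n : ℤ, (A q m (n+1) : ℂ) * z^n
        = (∑' n : ℤ, (A q m n : ℂ) * z^n) * z⁻¹ := by
      rw [← tsum_mul_right]
      have := (Equiv.subRight (1:ℤ)).tsum_eq (fun n => (A q m (n+1) : ℂ) * z^n)
      rw [← this]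
      apply tsum_congr
      intro n
      simp only [Equiv.subRight_apply, sub_add_cancel]
      rw [zpow_sub₀ hz, zpow_one]
      ring
    rw [f1, f2, step1, step2, shiftm, shiftp, ← ih]
    set P1 := ∏ j ∈ Finset.range m, (1 + (q:ℂ)*z*((q:ℂ)^2)^j) with hP1
    set P2 := ∏ j ∈ Finset.range m, (1 + (q:ℂ)/z*((q:ℂ)^2)^j) with hP2
    field_simp
    ring

end JTP

open JTP Filter Topology in
theorem stmt_12 (q : ℝ) (hq0 : 0 < q) (hq1 : q < 1) (z : ℂ) (hz : z ≠ 0) :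
    Summable (fun n : ℤ => (q : ℂ) ^ (n ^ 2) * z ^ n) ∧
    (∑' n : ℤ, (q : ℂ) ^ (n ^ 2) * z ^ n) =
      (∏' j : ℕ, (1 - (q : ℂ) ^ 2 * ((q : ℂ) ^ 2) ^ j)) *
      (∏' j : ℕ, (1 + (q : ℂ) * z * ((q : ℂ) ^ 2) ^ j)) *
      (∏' j : ℕ, (1 + (q : ℂ) / z * ((q : ℂ) ^ 2) ^ j)) := by
  have hq' : q ≠ 0 := hq0.ne'
  have hznorm : (0:ℝ) < ‖z‖ := norm_pos_iff.2 hz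
  have hw : ‖((q:ℂ)^2)‖ < 1 := by
    rw [show ((q:ℂ)^2) = ((q^2 : ℝ) : ℂ) by push_cast; ring, Complex.norm_real,
      Real.norm_eq_abs, abs_of_pos (by positivity)]
    nlinarith
  have multP1 : Multipliable (fun j : ℕ => 1 - (q:ℂ)^2*((q:ℂ)^2)^j) :=
    (mult_one_add (-(q:ℂ)^2) hw).congr (fun j => by ring)
  have multP2 : Multipliable (fun j : ℕ => 1 + (q:ℂ)*z*((q:ℂ)^2)^j) := mult_one_add _ hw
  have multP3 : Multipliable (fun j : ℕ => 1 + (q:ℂ)/z*((q:ℂ)^2)^j) := mult_one_add _ hw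
  have hGm : ∀ m : ℕ, (∏ j ∈ Finset.range m, (1 - (q:ℂ)^2*((q:ℂ)^2)^j)) = ((G q m : ℝ) : ℂ) := by
    intro m
    rw [G, Complex.ofReal_prod]
    apply Finset.prod_congr rfl
    intro j _
    push_cast
    ring
  set Gc := ∏' j : ℕ, (1 - (q:ℂ)^2*((q:ℂ)^2)^j) with hGcdef
  have hGtend : Tendsto (fun m : ℕ => ((G q m : ℝ):ℂ)) atTop (𝓝 Gc) :=
    (Multipliable.tendsto_prod_tprod_nat multP1).congr hGm
  have hGreal : Tendsto (G q) atTop (𝓝 Gc.re) :=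
    ((Complex.continuous_re.tendsto Gc).comp hGtend).congr (fun m => by simp)
  set L := Gc.re with hLdef
  obtain ⟨c, hcpos, hc⟩ := G_lower hq0 hq1
  have hcL : c ≤ L := ge_of_tendsto hGreal (Filter.Eventually.of_forall hc)
  have hLpos : 0 < L := lt_of_lt_of_le hcpos hcL
  have hGcL : Gc = ((L:ℝ):ℂ) :=
    tendsto_nhds_unique hGtend ((Complex.continuous_ofReal.tendsto L).comp hGreal)
  have hLne : ((L:ℝ):ℂ) ≠ 0 := Complex.ofReal_ne_zero.2 hLpos.ne'
  have hbsum : Summable (fun n : ℤ => q ^ (n^2) * ‖z‖ ^ n / (c*c)) :=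
    (sum_core hq0 hq1 hznorm).div_const _
  have hbound : ∀ (m : ℕ) (n : ℤ), ‖(A q m n : ℂ) * z^n‖ ≤ q ^ (n^2) * ‖z‖^n / (c*c) := by
    intro m n
    rw [norm_mul, norm_zpow, Complex.norm_real, Real.norm_eq_abs,
      abs_of_nonneg (A_nonneg hq0 hq1 m n)]
    calc A q m n * ‖z‖^n ≤ (q^(n^2)/(c*c)) * ‖z‖^n :=
          mul_le_mul_of_nonneg_right (A_le hq0 hq1 hcpos hc m n) (zpow_nonneg (norm_nonneg z) n)
    _ = q ^ (n^2) * ‖z‖^n / (c*c) := by ring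
  have hpt : ∀ n : ℤ, Tendsto (fun m : ℕ => (A q m n : ℂ) * z^n) atTop
      (𝓝 (((q ^ (n^2) / L : ℝ) : ℂ) * z^n)) := by
    intro n
    have t2m : Tendsto (fun m : ℕ => G q (2*m)) atTop (𝓝 L) :=
      hGreal.comp (tendsto_atTop_atTop.2 (fun b => ⟨b, fun m hm => by omega⟩))
    have tp : Tendsto (fun m : ℕ => Gz q ((m:ℤ)+n)) atTop (𝓝 L) :=
      hGreal.comp (tendsto_atTop_atTop.2 (fun b => ⟨b + n.natAbs, fun m hm => by omega⟩))
    have tm : Tendsto (fun m : ℕ => Gz q ((m:ℤ)-n)) atTop (𝓝 L) :=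
      hGreal.comp (tendsto_atTop_atTop.2 (fun b => ⟨b + n.natAbs, fun m hm => by omega⟩))
    have tform : Tendsto (fun m : ℕ =>
        q ^ (n^2) * G q (2*m) / (Gz q ((m:ℤ)+n) * Gz q ((m:ℤ)-n)))
        atTop (𝓝 (q ^ (n^2) * L / (L*L))) :=
      (tendsto_const_nhds.mul t2m).div (tp.mul tm) (mul_pos hLpos hLpos).ne'
    have heq : ∀ᶠ m : ℕ in atTop,
        q ^ (n^2) * G q (2*m) / (Gz q ((m:ℤ)+n) * Gz q ((m:ℤ)-n)) = A q m n := by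
      filter_upwards [eventually_ge_atTop n.natAbs] with m hm
      rw [A_eval (by omega)]
    have hval : q ^ (n^2) * L / (L*L) = q ^ (n^2) / L := by
      rw [mul_comm L L, ← div_div, mul_div_assoc, div_self hLpos.ne', mul_one]
    have treal : Tendsto (fun m : ℕ => A q m n) atTop (𝓝 (q ^ (n^2) / L)) := by
      rw [← hval]
      exact tform.congr' heq
    exact ((Complex.continuous_ofReal.tendsto _).comp treal).mul_const _
  have htsum : Tendsto (fun m : ℕ => ∑' n : ℤ, (A q m n : ℂ) * z^n) atTop
      (𝓝 (∑' n : ℤ, ((q ^ (n^2) / L : ℝ) : ℂ) * z^n)) :=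
    tendsto_tsum_of_dominated_convergence hbsum hpt
      (Filter.Eventually.of_forall (fun m n => hbound m n))
  have hprod : Tendsto (fun m : ℕ => (∏ j ∈ Finset.range m, (1 + (q:ℂ)*z*((q:ℂ)^2)^j)) *
      (∏ j ∈ Finset.range m, (1 + (q:ℂ)/z*((q:ℂ)^2)^j))) atTop
      (𝓝 ((∏' j : ℕ, (1 + (q:ℂ)*z*((q:ℂ)^2)^j)) * (∏' j : ℕ, (1 + (q:ℂ)/z*((q:ℂ)^2)^j)))) :=
    (Multipliable.tendsto_prod_tprod_nat multP2).mul (Multipliable.tendsto_prod_tprod_nat multP3)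
  have hmain : (∏' j : ℕ, (1 + (q:ℂ)*z*((q:ℂ)^2)^j)) * (∏' j : ℕ, (1 + (q:ℂ)/z*((q:ℂ)^2)^j))
      = ∑' n : ℤ, ((q ^ (n^2) / L : ℝ) : ℂ) * z^n :=
    tendsto_nhds_unique (hprod.congr (fun m => key hq0 hq1 z hz m)) htsum
  have hterm : ∀ n : ℤ, ((q ^ (n^2) / L : ℝ) : ℂ) * z^n
      = ((L:ℝ):ℂ)⁻¹ * ((q:ℂ)^(n^2) * z^n) := by
    intro n
    rw [Complex.ofReal_div, Complex.ofReal_zpow]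
    field_simp
  have hsum : Summable (fun n : ℤ => (q:ℂ)^(n^2) * z^n) := by
    apply Summable.of_norm
    apply (sum_core hq0 hq1 hznorm).congr
    intro n
    rw [norm_mul, norm_zpow, norm_zpow, Complex.norm_real, Real.norm_eq_abs, abs_of_pos hq0]
  refine ⟨hsum, ?_⟩
  have h2 : (∏' j : ℕ, (1 + (q:ℂ)*z*((q:ℂ)^2)^j)) * (∏' j : ℕ, (1 + (q:ℂ)/z*((q:ℂ)^2)^j))
      = ((L:ℝ):ℂ)⁻¹ * ∑' n : ℤ, (q:ℂ)^(n^2) * z^n := by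
    rw [hmain, tsum_congr hterm, tsum_mul_left]
  rw [hGcL, mul_assoc, h2, ← mul_assoc, mul_inv_cancel₀ hLne, one_mul]
end
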